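/- Let G be a finite group. If X is a paracompact G-space of covering dimension at most n, then the orbit space X/G has covering dimension at most |G|(n+2) − 2. -/

import Mathlib

/-- A topological space `Y` has covering dimension at most `n`: every open cover admits an
open refinement in which every intersection of `n + 2` distinct members is empty. -/
def HasCovDimLE (Y : Type*) [TopologicalSpace Y] (n : ℕ) : Prop :=
  ∀ 𝒰 : Set (Set Y), (∀ U ∈ 𝒰, IsOpen U) → ⋃₀ 𝒰 = Set.univ →
    ∃ 𝒱 : Set (Set Y), (∀ V ∈ 𝒱, IsOpen V) ∧ ⋃₀ 𝒱 = Set.univ ∧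
      (∀ V ∈ 𝒱, ∃ U ∈ 𝒰, V ⊆ U) ∧
      ∀ s : Finset (Set Y), ↑s ⊆ 𝒱 → s.card = n + 2 →
        ⋂₀ (↑s : Set (Set Y)) = ∅

/-- If `X` is a paracompact `G`-space of covering dimension at most `n`
(`G` finite), then the orbit space `X/G` has covering dimension at most `|G|(n+2) - 2`. -/
theorem bredon_covdim_orbit_space
    {G X : Type*} [Group G] [Finite G]
    [TopologicalSpace X] [ParacompactSpace X] [MulAction G X]
    (hact : ∀ g : G, Continuous fun x : X => g • x)
    (n : ℕ) (hX : HasCovDimLE X n) :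
    HasCovDimLE (Quotient (MulAction.orbitRel G X)) (Nat.card G * (n + 2) - 2) := by
  classical
  have : Fintype G := Fintype.ofFinite G
  set q : X → Quotient (MulAction.orbitRel G X) := Quotient.mk _ with hq
  have hqcont : Continuous q := continuous_quotient_mk'
  have hqsurj : Function.Surjective q := Quotient.mk''_surjective
  have hqeq : ∀ a b : X, q a = q b ↔ ∃ g : G, g • b = a := by
    intro a b
    rw [hq, Quotient.eq]
    exact MulAction.orbitRel_apply.trans MulAction.mem_orbit_iff
  intro 𝒰 h𝒰open h𝒰cov
  -- pull back the cover
  obtain ⟨𝒱, h𝒱open, h𝒱cov, h𝒱ref, h𝒱int⟩ :=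
    hX ((fun U => q ⁻¹' U) '' 𝒰)
      (by rintro V ⟨U, hU, rfl⟩; exact (h𝒰open U hU).preimage hqcont)
      (by
        rw [Set.sUnion_image]
        apply Set.eq_univ_of_forall
        intro x
        have : q x ∈ ⋃₀ 𝒰 := h𝒰cov ▸ Set.mem_univ _
        obtain ⟨U, hU, hxU⟩ := this
        exact Set.mem_iUnion₂.mpr ⟨U, hU, hxU⟩)
  refine ⟨(fun V => q '' V) '' 𝒱, ?_, ?_, ?_, ?_⟩
  · -- openness of pushed-forward sets
    rintro W ⟨V, hV, rfl⟩
    rw [isOpen_coinduced (f := q)]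
    have : q ⁻¹' (q '' V) = ⋃ g : G, (fun x => g • x) ⁻¹' V := by
      ext x
      simp only [Set.mem_preimage, Set.mem_image, Set.mem_iUnion]
      constructor
      · rintro ⟨v, hv, hvx⟩
        obtain ⟨g, rfl⟩ := (hqeq v x).mp hvx
        exact ⟨g, hv⟩
      · rintro ⟨g, hg⟩
        exact ⟨g • x, hg, (hqeq _ _).mpr ⟨g, rfl⟩⟩
    rw [this]
    exact isOpen_iUnion fun g => (h𝒱open V hV).preimage (hact g)
  · -- covering
    apply Set.eq_univ_of_forall
    intro y
    obtain ⟨x, rfl⟩ := hqsurj y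
    have : x ∈ ⋃₀ 𝒱 := h𝒱cov ▸ Set.mem_univ _
    obtain ⟨V, hV, hxV⟩ := this
    exact ⟨q '' V, ⟨V, hV, rfl⟩, ⟨x, hxV, rfl⟩⟩
  · -- refinement
    rintro W ⟨V, hV, rfl⟩
    obtain ⟨U', ⟨U, hU, rfl⟩, hVU⟩ := h𝒱ref V hV
    exact ⟨U, hU, (Set.image_mono (f := q) hVU).trans (Set.image_preimage_subset q U)⟩
  · -- intersection multiplicity
    intro s hs hscard
    by_contra hne
    obtain ⟨y, hy⟩ := Set.nonempty_iff_ne_empty.mpr hne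
    obtain ⟨x₀, rfl⟩ := hqsurj y
    have key : ∀ W ∈ s, ∃ (V : Set X) (g : G), V ∈ 𝒱 ∧ q '' V = W ∧ g • x₀ ∈ V := by
      intro W hW
      obtain ⟨V, hV, rfl⟩ := hs hW
      have hyW : q x₀ ∈ q '' V := hy (q '' V) hW
      obtain ⟨v, hv, hvx⟩ := hyW
      obtain ⟨g, rfl⟩ := (hqeq v x₀).mp hvx
      exact ⟨V, g, hV, rfl, hv⟩
    choose! V g hV hqV hg using key
    -- pigeonhole
    have hGpos : 0 < Nat.card G := Nat.card_pos
    have hscard' : s.card = Nat.card G * (n + 2) := by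
      rw [hscard, Nat.sub_add_cancel]
      calc 2 ≤ 1 * (n + 2) := by omega
        _ ≤ Nat.card G * (n + 2) := Nat.mul_le_mul_right _ hGpos
    obtain ⟨g₀, -, hle⟩ :=
      Finset.exists_le_card_fiber_of_mul_le_card_of_maps_to
        (s := s) (t := (Finset.univ : Finset G)) (f := g)
        (fun W _ => Finset.mem_univ _) Finset.univ_nonempty
        (by rw [Finset.card_univ, ← Nat.card_eq_fintype_card, hscard'])
    obtain ⟨t, hts, htcard⟩ :=
      Finset.exists_subset_card_eq hle
    have htsub : ∀ W ∈ t, W ∈ s ∧ g W = g₀ := by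
      intro W hW
      have := hts hW
      rw [Finset.mem_filter] at this
      exact this
    have hinj : Set.InjOn V ↑t := by
      intro W₁ hW₁ W₂ hW₂ hVeq
      rw [← hqV W₁ (htsub W₁ hW₁).1, ← hqV W₂ (htsub W₂ hW₂).1, hVeq]
    have hcard' : (t.image V).card = n + 2 := by
      rw [Finset.card_image_of_injOn hinj, htcard]
    have hVsub : ↑(t.image V) ⊆ 𝒱 := by
      intro V' hV'
      simp only [Finset.coe_image, Set.mem_image, Finset.mem_coe] at hV'
      obtain ⟨W, hW, rfl⟩ := hV'
      exact hV W (htsub W hW).1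
    have hempty := h𝒱int (t.image V) hVsub hcard'
    have hmem : g₀ • x₀ ∈ ⋂₀ (↑(t.image V) : Set (Set X)) := by
      intro V' hV'
      simp only [Finset.coe_image, Set.mem_image, Finset.mem_coe] at hV'
      obtain ⟨W, hW, rfl⟩ := hV'
      have := hg W (htsub W hW).1
      rwa [(htsub W hW).2] at this
    rw [hempty] at hmem
    exact hmem
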